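/- Let p ≥ 5 be prime and k an integer with 3 ≤ k ≤ v - 3 and k not congruent to 1 or 2 mod p. Let G, G' be graphs on the same set V of v vertices with v ≥ 6. If for every k-element subset K of V, the number of 3-homogeneous subsets of G|_K is congruent mod p to that of G'|_K, then G and G' have the same 3-homogeneous subsets. -/

import Mathlib

/-- A 3-element subset is homogeneous in `G` if it induces a complete or an empty graph. -/
def IsHomog3 {V : Type*} (G : SimpleGraph V) (S : Finset V) : Prop :=
  S.card = 3 ∧ ((∀ x ∈ S, ∀ y ∈ S, x ≠ y → G.Adj x y) ∨ (∀ x ∈ S, ∀ y ∈ S, ¬ G.Adj x y))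

/-- Number of 3-homogeneous subsets of the induced subgraph of `G` on `K`. -/
def homog3CountOn {V : Type*} [DecidableEq V] (G : SimpleGraph V) [DecidableRel G.Adj]
    (K : Finset V) : ℕ :=
  ((K.powersetCard 3).filter
    (fun S => (∀ x ∈ S, ∀ y ∈ S, x ≠ y → G.Adj x y) ∨ (∀ x ∈ S, ∀ y ∈ S, ¬ G.Adj x y))).card

namespace Homog3Aux

open Finset

variable {V : Type*} [DecidableEq V]

section CommRing

variable {R : Type*} [CommRing R]

lemma sum_powersetCard_insert (f : Finset V → R) {x : V} {A : Finset V} (hx : x ∉ A) (n : ℕ) :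
    ∑ S ∈ (insert x A).powersetCard (n+1), f S =
      ∑ S ∈ A.powersetCard (n+1), f S + ∑ P ∈ A.powersetCard n, f (insert x P) := by
  rw [Finset.powersetCard_succ_insert hx, Finset.sum_union, Finset.sum_image]
  · intro P hP Q hQ hPQ
    have hxP : x ∉ P := fun hc => hx ((Finset.mem_powersetCard.1 hP).1 hc)
    have hxQ : x ∉ Q := fun hc => hx ((Finset.mem_powersetCard.1 hQ).1 hc)
    rw [← Finset.erase_insert hxP, ← Finset.erase_insert hxQ, hPQ]
  · rw [Finset.disjoint_left]
    intro S hS hS'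
    obtain ⟨P, hP, rfl⟩ := Finset.mem_image.1 hS'
    exact hx ((Finset.mem_powersetCard.1 hS).1 (Finset.mem_insert_self x P))

lemma sum_powersetCard_one (f : Finset V → R) (A : Finset V) :
    ∑ P ∈ A.powersetCard 1, f P = ∑ w ∈ A, f {w} := by
  classical
  induction A using Finset.induction with
  | empty =>
    rw [show (Finset.powersetCard 1 (∅ : Finset V)) = ∅ from
      Finset.powersetCard_eq_empty.2 (by simp)]
    simp
  | insert _ _ hx ih =>
    rename_i x A
    rw [sum_powersetCard_insert f hx 0, Finset.sum_insert hx, ih]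
    simp [add_comm]

/-- `fsum γ M` is the sum of `γ` over the 3-element subsets of `M`. -/
def fsum (γ : Finset V → R) (M : Finset V) : R := ∑ S ∈ M.powersetCard 3, γ S

lemma fsum_insert (γ : Finset V → R) {x : V} {A : Finset V} (hx : x ∉ A) :
    fsum γ (insert x A) = fsum γ A + ∑ P ∈ A.powersetCard 2, γ (insert x P) :=
  sum_powersetCard_insert γ hx 2

lemma pairsum_insert (γ : Finset V → R) (u : V) {y : V} {A : Finset V} (hy : y ∉ A) :
    ∑ P ∈ (insert y A).powersetCard 2, γ (insert u P) =
      ∑ P ∈ A.powersetCard 2, γ (insert u P) + ∑ w ∈ A, γ (insert u (insert y {w})) := by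
  rw [sum_powersetCard_insert (fun P => γ (insert u P)) hy 1, sum_powersetCard_one]

lemma sum_fsum_erase (γ : Finset V → R) (M : Finset V) :
    ∑ u ∈ M, fsum γ (M.erase u) = (M.card - 3) • fsum γ M := by
  have key : ∀ u : V, (M.erase u).powersetCard 3 = (M.powersetCard 3).filter (fun S => u ∉ S) := by
    intro u
    ext S
    simp only [Finset.mem_powersetCard, Finset.mem_filter, Finset.subset_erase]
    tauto
  calc ∑ u ∈ M, fsum γ (M.erase u)
      = ∑ u ∈ M, ∑ S ∈ M.powersetCard 3, if u ∉ S then γ S else 0 := by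
        refine Finset.sum_congr rfl fun u _ => ?_
        rw [fsum, key u, Finset.sum_filter]
    _ = ∑ S ∈ M.powersetCard 3, ∑ u ∈ M, if u ∉ S then γ S else 0 := Finset.sum_comm
    _ = ∑ S ∈ M.powersetCard 3, (M.card - 3) • γ S := by
        refine Finset.sum_congr rfl fun S hS => ?_
        obtain ⟨hSM, hS3⟩ := Finset.mem_powersetCard.1 hS
        rw [← Finset.sum_filter, ← Finset.sdiff_eq_filter, Finset.sum_const,
          Finset.card_sdiff_of_subset hSM, hS3]
    _ = (M.card - 3) • fsum γ M := by rw [fsum, Finset.smul_sum]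

end CommRing

lemma mod_eq_of_dvd_sub {p k r : ℕ} (hr : r < p) (hrk : r ≤ k) (hdvd : p ∣ k - r) :
    k % p = r := by
  obtain ⟨c, hc⟩ := hdvd
  have hk : k = p * c + r := by
    have h2 := Nat.sub_add_cancel hrk
    rw [← h2, hc]
  rw [hk, Nat.mul_add_mod, Nat.mod_eq_of_lt hr]

section Zmodp

variable {p : ℕ} [Fact p.Prime]

lemma fzero_step (γ : Finset V → ZMod p) (m : ℕ)
    (hprev : ∀ K : Finset V, K.card = m → fsum γ K = 0)
    (hunit : ((m - 2 : ℕ) : ZMod p) ≠ 0) :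
    ∀ M : Finset V, M.card = m + 1 → fsum γ M = 0 := by
  intro M hM
  have h1 : ∑ u ∈ M, fsum γ (M.erase u) = 0 :=
    Finset.sum_eq_zero fun u hu => hprev _ (by rw [Finset.card_erase_of_mem hu, hM]; omega)
  rw [sum_fsum_erase, hM] at h1
  have h2 : ((m + 1 - 3 : ℕ) : ZMod p) * fsum γ M = 0 := by rw [← nsmul_eq_mul]; exact h1
  have hmm : m + 1 - 3 = m - 2 := by omega
  rw [hmm] at h2
  rcases mul_eq_zero.1 h2 with hcontra | hgood
  · exact absurd hcontra hunit
  · exact hgood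

/-- The key identity: for a `(k-1)`-set `A` and three distinct vertices outside it,
`γ {x,y,z} = - fsum γ A`, provided `fsum γ` vanishes on sets of sizes `k, k+1, k+2`. -/
lemma gamma_eq_neg_fsum (γ : Finset V → ZMod p) (k : ℕ) (hk3 : 3 ≤ k)
    {A : Finset V} {x y z : V}
    (hA : A.card = k - 1)
    (hx : x ∉ A) (hy : y ∉ A) (hz : z ∉ A) (hxy : x ≠ y) (hxz : x ≠ z) (hyz : y ≠ z)
    (h0 : ∀ K : Finset V, K.card = k → fsum γ K = 0)
    (h1 : ∀ K : Finset V, K.card = k + 1 → fsum γ K = 0)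
    (h2 : ∀ K : Finset V, K.card = k + 2 → fsum γ K = 0) :
    γ {x, y, z} = - fsum γ A := by
  -- memberships
  have hxyA : x ∉ insert y A := by simp [hxy, hx]
  have hyzA : y ∉ insert z A := by simp [hyz, hy]
  have hxzA : x ∉ insert z A := by simp [hxz, hx]
  have hxyzA : x ∉ insert y (insert z A) := by simp [hxy, hxz, hx]
  -- cards
  have cardA1 : ∀ u : V, u ∉ A → (insert u A).card = k := by
    intro u hu; rw [Finset.card_insert_of_notMem hu, hA]; omega
  have cardyz : (insert y (insert z A)).card = k + 1 := by
    rw [Finset.card_insert_of_notMem hyzA, cardA1 z hz]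
  have cardxyz : (insert x (insert y (insert z A))).card = k + 2 := by
    rw [Finset.card_insert_of_notMem hxyzA, cardyz]
  -- level-1: for u ∉ A, the pair-sum of u over A equals -fsum γ A
  have hG1 : ∀ u : V, u ∉ A → ∑ P ∈ A.powersetCard 2, γ (insert u P) = - fsum γ A := by
    intro u hu
    have := h0 _ (cardA1 u hu)
    rw [fsum_insert γ hu] at this
    linear_combination this
  -- level-2: for u v ∉ A, u ≠ v, the sum over w ∈ A of γ {u,v,w} equals fsum γ A
  have hG2 : ∀ u v : V, u ∉ A → v ∉ A → u ≠ v →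
      ∑ w ∈ A, γ (insert u (insert v {w})) = fsum γ A := by
    intro u v hu hv huv
    have huvA : u ∉ insert v A := by simp [huv, hu]
    have := h1 _ (by rw [Finset.card_insert_of_notMem huvA, cardA1 v hv])
    rw [fsum_insert γ huvA, h0 _ (cardA1 v hv), pairsum_insert γ u hv, hG1 u hu] at this
    linear_combination this
  -- level-3
  have h3 := h2 _ cardxyz
  rw [fsum_insert γ hxyzA, h1 _ cardyz, pairsum_insert γ x hyzA, pairsum_insert γ x hz,
    Finset.sum_insert hz, hG1 x hx, hG2 x z hx hz hxz, hG2 x y hx hy hxy] at h3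
  linear_combination h3

lemma exists_triple_outside [Fintype V] {W : Finset V} (hW : W.card + 3 ≤ Fintype.card V) :
    ∃ x y z : V, x ≠ y ∧ x ≠ z ∧ y ≠ z ∧ x ∉ W ∧ y ∉ W ∧ z ∉ W := by
  have hcard : 3 ≤ Wᶜ.card := by rw [Finset.card_compl]; omega
  obtain ⟨T, hTsub, hT3⟩ := Finset.exists_subset_card_eq (s := Wᶜ) (n := 3) hcard
  obtain ⟨x, y, z, hxy, hxz, hyz, rfl⟩ := Finset.card_eq_three.1 hT3
  refine ⟨x, y, z, hxy, hxz, hyz, ?_, ?_, ?_⟩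
  · exact Finset.mem_compl.1 (hTsub (by simp))
  · exact Finset.mem_compl.1 (hTsub (by simp))
  · exact Finset.mem_compl.1 (hTsub (by simp))

lemma fsum_const [Fintype V] (γ : Finset V → ZMod p) (k : ℕ) (hk3 : 3 ≤ k)
    (hkv : k + 3 ≤ Fintype.card V)
    (h0 : ∀ K : Finset V, K.card = k → fsum γ K = 0)
    (h1 : ∀ K : Finset V, K.card = k + 1 → fsum γ K = 0)
    (h2 : ∀ K : Finset V, K.card = k + 2 → fsum γ K = 0) :
    ∀ A B : Finset V, A.card = k - 1 → B.card = k - 1 → fsum γ A = fsum γ B := by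
  have step : ∀ A B : Finset V, A.card = k - 1 → B.card = k - 1 →
      (A ∪ B).card ≤ k → fsum γ A = fsum γ B := by
    intro A B hA hB hAB
    obtain ⟨x, y, z, hxy, hxz, hyz, hx, hy, hz⟩ :=
      exists_triple_outside (W := A ∪ B) (by omega)
    have e1 := gamma_eq_neg_fsum γ k hk3 hA
      (fun hc => hx (Finset.mem_union_left _ hc))
      (fun hc => hy (Finset.mem_union_left _ hc))
      (fun hc => hz (Finset.mem_union_left _ hc)) hxy hxz hyz h0 h1 h2
    have e2 := gamma_eq_neg_fsum γ k hk3 hB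
      (fun hc => hx (Finset.mem_union_right _ hc))
      (fun hc => hy (Finset.mem_union_right _ hc))
      (fun hc => hz (Finset.mem_union_right _ hc)) hxy hxz hyz h0 h1 h2
    exact neg_injective (e1.symm.trans e2)
  have main : ∀ n : ℕ, ∀ A B : Finset V, A.card = k - 1 → B.card = k - 1 →
      (B \ A).card ≤ n → fsum γ A = fsum γ B := by
    intro n
    induction n with
    | zero =>
      intro A B hA hB hn
      have hBA : B ⊆ A := by
        rw [← Finset.sdiff_eq_empty_iff_subset]
        exact Finset.card_eq_zero.1 (Nat.le_zero.1 hn)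
      rw [Finset.eq_of_subset_of_card_le hBA (le_of_eq (hA.trans hB.symm))]
    | succ n ih =>
      intro A B hA hB hn
      rcases Nat.eq_zero_or_pos (B \ A).card with h0' | hpos
      · exact ih A B hA hB (by omega)
      obtain ⟨b, hb⟩ := Finset.card_pos.1 hpos
      have hbB : b ∈ B := (Finset.mem_sdiff.1 hb).1
      have hbA : b ∉ A := (Finset.mem_sdiff.1 hb).2
      have hABcard : (A \ B).card = (B \ A).card :=
        Finset.card_sdiff_comm (hA.trans hB.symm)
      obtain ⟨a, ha⟩ := Finset.card_pos.1 (by omega : 0 < (A \ B).card)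
      have haA : a ∈ A := (Finset.mem_sdiff.1 ha).1
      have haB : a ∉ B := (Finset.mem_sdiff.1 ha).2
      have hbnotin : b ∉ A.erase a := fun hc => hbA (Finset.mem_of_mem_erase hc)
      have hA' : (insert b (A.erase a)).card = k - 1 := by
        rw [Finset.card_insert_of_notMem hbnotin, Finset.card_erase_of_mem haA, hA]
        omega
      have hstep : fsum γ A = fsum γ (insert b (A.erase a)) := by
        apply step A _ hA hA'
        have hsub : A ∪ insert b (A.erase a) ⊆ insert b A := by
          intro w hw
          rcases Finset.mem_union.1 hw with hw | hw
          · exact Finset.mem_insert_of_mem hw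
          · rcases Finset.mem_insert.1 hw with rfl | hw
            · exact Finset.mem_insert_self _ _
            · exact Finset.mem_insert_of_mem (Finset.mem_of_mem_erase hw)
        calc (A ∪ insert b (A.erase a)).card ≤ (insert b A).card := Finset.card_le_card hsub
          _ ≤ k := by rw [Finset.card_insert_of_notMem hbA, hA]; omega
      rw [hstep]
      apply ih _ B hA' hB
      have hsub2 : B \ insert b (A.erase a) ⊆ (B \ A).erase b := by
        intro w hw
        obtain ⟨hwB, hwA'⟩ := Finset.mem_sdiff.1 hw
        have hwb : w ≠ b := fun hc => hwA' (by rw [hc]; exact Finset.mem_insert_self b _)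
        refine Finset.mem_erase.2 ⟨hwb, Finset.mem_sdiff.2 ⟨hwB, fun hwA => ?_⟩⟩
        exact hwA' (Finset.mem_insert_of_mem
          (Finset.mem_erase.2 ⟨fun hc => haB (hc ▸ hwB), hwA⟩))
      calc (B \ insert b (A.erase a)).card
          ≤ ((B \ A).erase b).card := Finset.card_le_card hsub2
        _ = (B \ A).card - 1 := Finset.card_erase_of_mem hb
        _ ≤ n := by omega
  intro A B hA hB
  exact main (B \ A).card A B hA hB le_rfl

end Zmodp

/-- The homogeneity condition for a finset. -/
abbrev HomogCond (H : SimpleGraph V) (S : Finset V) : Prop :=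
  (∀ x ∈ S, ∀ y ∈ S, x ≠ y → H.Adj x y) ∨ (∀ x ∈ S, ∀ y ∈ S, ¬ H.Adj x y)

lemma complete3 {H : SimpleGraph V} {a b c : V} (h1 : H.Adj a b) (h2 : H.Adj a c)
    (h3 : H.Adj b c) :
    ∀ x ∈ ({a, b, c} : Finset V), ∀ y ∈ ({a, b, c} : Finset V), x ≠ y → H.Adj x y := by
  intro x hx y hy hxy
  simp only [Finset.mem_insert, Finset.mem_singleton] at hx hy
  rcases hx with rfl | rfl | rfl <;> rcases hy with rfl | rfl | rfl <;>
    first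
      | exact absurd rfl hxy
      | assumption
      | exact h1.symm
      | exact h2.symm
      | exact h3.symm

lemma empty3 {H : SimpleGraph V} {a b c : V} (h1 : ¬H.Adj a b) (h2 : ¬H.Adj a c)
    (h3 : ¬H.Adj b c) :
    ∀ x ∈ ({a, b, c} : Finset V), ∀ y ∈ ({a, b, c} : Finset V), ¬ H.Adj x y := by
  intro x hx y hy
  simp only [Finset.mem_insert, Finset.mem_singleton] at hx hy
  rcases hx with rfl | rfl | rfl <;> rcases hy with rfl | rfl | rfl <;>
    first
      | exact fun hadj => H.irrefl hadj
      | assumption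
      | exact fun hadj => h1 hadj.symm
      | exact fun hadj => h2 hadj.symm
      | exact fun hadj => h3 hadj.symm

lemma card3_finset {a b c : V} (hab : a ≠ b) (hac : a ≠ c) (hbc : b ≠ c) :
    ({a, b, c} : Finset V).card = 3 := Finset.card_eq_three.2 ⟨a, b, c, hab, hac, hbc, rfl⟩

lemma ramsey_helper (H : SimpleGraph V) (a : V) (N : Finset V)
    (hadj : ∀ u ∈ N, H.Adj a u) (h3 : 3 ≤ N.card) :
    ∃ S : Finset V, S.card = 3 ∧ HomogCond H S := by
  obtain ⟨T, hTN, hT3⟩ := Finset.exists_subset_card_eq (s := N) (n := 3) h3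
  obtain ⟨b, c, d, hbc, hbd, hcd, rfl⟩ := Finset.card_eq_three.1 hT3
  have hb : H.Adj a b := hadj b (hTN (by simp))
  have hc : H.Adj a c := hadj c (hTN (by simp))
  have hd : H.Adj a d := hadj d (hTN (by simp))
  by_cases h1 : H.Adj b c
  · exact ⟨{a, b, c}, card3_finset hb.ne hc.ne hbc, Or.inl (complete3 hb hc h1)⟩
  by_cases h2 : H.Adj b d
  · exact ⟨{a, b, d}, card3_finset hb.ne hd.ne hbd, Or.inl (complete3 hb hd h2)⟩
  by_cases h4 : H.Adj c d
  · exact ⟨{a, c, d}, card3_finset hc.ne hd.ne hcd, Or.inl (complete3 hc hd h4)⟩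
  · exact ⟨{b, c, d}, card3_finset hbc hbd hcd, Or.inr (empty3 h1 h2 h4)⟩

lemma homogCond_compl {H : SimpleGraph V} {S : Finset V} (h : HomogCond Hᶜ S) :
    HomogCond H S := by
  rcases h with h | h
  · right
    intro x hx y hy hadj
    by_cases hxy : x = y
    · exact H.irrefl (hxy ▸ hadj)
    · exact (SimpleGraph.compl_adj _ _ _ |>.1 (h x hx y hy hxy)).2 hadj
  · left
    intro x hx y hy hxy
    by_contra hadj
    exact h x hx y hy ((SimpleGraph.compl_adj _ _ _).2 ⟨hxy, hadj⟩)

lemma ramsey33 [Fintype V] (H : SimpleGraph V) [DecidableRel H.Adj]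
    (hv : 6 ≤ Fintype.card V) :
    ∃ S : Finset V, S.card = 3 ∧ HomogCond H S := by
  have hne : Nonempty V := Fintype.card_pos_iff.1 (by omega)
  obtain ⟨a⟩ := hne
  have hUcard : 5 ≤ ((Finset.univ : Finset V).erase a).card := by
    rw [Finset.card_erase_of_mem (Finset.mem_univ a), Finset.card_univ]; omega
  have hsplit := Finset.card_filter_add_card_filter_not
    (s := (Finset.univ : Finset V).erase a) (p := fun u => H.Adj a u)
  rcases le_or_gt 3 ((((Finset.univ : Finset V).erase a).filter (fun u => H.Adj a u)).card)
      with hN | hN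
  · exact ramsey_helper H a _ (fun u hu => (Finset.mem_filter.1 hu).2) hN
  · have hN' : 3 ≤ ((((Finset.univ : Finset V).erase a).filter
        (fun u => ¬ H.Adj a u)).card) := by omega
    have hadj' : ∀ u ∈ ((Finset.univ : Finset V).erase a).filter (fun u => ¬ H.Adj a u),
        Hᶜ.Adj a u := by
      intro u hu
      obtain ⟨hu1, hu2⟩ := Finset.mem_filter.1 hu
      exact (SimpleGraph.compl_adj _ _ _).2 ⟨fun hc => (Finset.mem_erase.1 hu1).1 hc.symm, hu2⟩
    obtain ⟨S, hS3, hScond⟩ := ramsey_helper Hᶜ a _ hadj' hN'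
    exact ⟨S, hS3, homogCond_compl hScond⟩

/-- Indicator of the homogeneity condition. -/
def hind (H : SimpleGraph V) [DecidableRel H.Adj] (S : Finset V) : ℕ :=
  if HomogCond H S then 1 else 0

lemma hind_pos {H : SimpleGraph V} [DecidableRel H.Adj] {S : Finset V}
    (h : HomogCond H S) : hind H S = 1 := if_pos h

lemma hind_neg {H : SimpleGraph V} [DecidableRel H.Adj] {S : Finset V}
    (h : ¬ HomogCond H S) : hind H S = 0 := if_neg h

lemma count_cast {p : ℕ} (H : SimpleGraph V) [DecidableRel H.Adj] (K : Finset V) :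
    ((homog3CountOn H K : ℕ) : ZMod p) =
      ∑ S ∈ K.powersetCard 3, ((hind H S : ℕ) : ZMod p) := by
  rw [homog3CountOn, Finset.card_filter, Nat.cast_sum]
  refine Finset.sum_congr rfl fun S _ => ?_
  by_cases hS : HomogCond H S
  · rw [if_pos hS, hind_pos hS]
  · rw [if_neg hS, hind_neg hS]

end Homog3Aux

theorem same_homog3_of_counts_mod_p {V : Type*} [Fintype V] [DecidableEq V]
    (G G' : SimpleGraph V) [DecidableRel G.Adj] [DecidableRel G'.Adj]
    (p k : ℕ) (hp : p.Prime) (hp5 : 5 ≤ p)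
    (hk3 : 3 ≤ k) (hkv : k + 3 ≤ Fintype.card V) (hv6 : 6 ≤ Fintype.card V)
    (h1 : k % p ≠ 1) (h2 : k % p ≠ 2)
    (h : ∀ K : Finset V, K.card = k → homog3CountOn G K ≡ homog3CountOn G' K [MOD p]) :
    ∀ S : Finset V, IsHomog3 G S ↔ IsHomog3 G' S := by
  haveI : Fact p.Prime := ⟨hp⟩
  open Homog3Aux in
  set γ : Finset V → ZMod p := fun S =>
    ((Homog3Aux.hind G S : ℕ) : ZMod p) - ((Homog3Aux.hind G' S : ℕ) : ZMod p) with hγdef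
  -- small numeric facts
  have h2ne : (2 : ZMod p) ≠ 0 := by
    intro hc
    have hdvd : p ∣ 2 := by
      have h2c : ((2 : ℕ) : ZMod p) = 0 := by push_cast; exact hc
      exact (ZMod.natCast_eq_zero_iff 2 p).1 h2c
    have := Nat.le_of_dvd (by norm_num) hdvd
    omega
  -- fsum γ vanishes on k-sets
  have h0 : ∀ K : Finset V, K.card = k → Homog3Aux.fsum γ K = 0 := by
    intro K hK
    have hmod := (ZMod.natCast_eq_natCast_iff _ _ p).2 (h K hK)
    rw [Homog3Aux.count_cast G K, Homog3Aux.count_cast G' K] at hmod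
    rw [Homog3Aux.fsum, hγdef]
    rw [Finset.sum_sub_distrib, hmod, sub_self]
  -- units
  have hu1 : ((k - 2 : ℕ) : ZMod p) ≠ 0 := by
    intro hc
    exact h2 (Homog3Aux.mod_eq_of_dvd_sub (by omega) (by omega)
      ((ZMod.natCast_eq_zero_iff _ _).1 hc))
  have hu2 : ((k + 1 - 2 : ℕ) : ZMod p) ≠ 0 := by
    intro hc
    have hkk : k + 1 - 2 = k - 1 := by omega
    rw [hkk] at hc
    exact h1 (Homog3Aux.mod_eq_of_dvd_sub (by omega) (by omega)
      ((ZMod.natCast_eq_zero_iff _ _).1 hc))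
  have h1s : ∀ K : Finset V, K.card = k + 1 → Homog3Aux.fsum γ K = 0 :=
    Homog3Aux.fzero_step γ k h0 hu1
  have h2s : ∀ K : Finset V, K.card = k + 2 → Homog3Aux.fsum γ K = 0 :=
    Homog3Aux.fzero_step γ (k + 1) h1s hu2
  -- a reference (k-1)-set
  obtain ⟨A₀, -, hA₀⟩ := Finset.exists_subset_card_eq (s := (Finset.univ : Finset V)) (n := k - 1)
    (by rw [Finset.card_univ]; omega)
  -- γ is constant on triples
  have hgam : ∀ T : Finset V, T.card = 3 → γ T = - Homog3Aux.fsum γ A₀ := by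
    intro T hT
    obtain ⟨x, y, z, hxy, hxz, hyz, rfl⟩ := Finset.card_eq_three.1 hT
    have hcompl : k - 1 ≤ (({x, y, z} : Finset V)ᶜ).card := by
      rw [Finset.card_compl, Homog3Aux.card3_finset hxy hxz hyz]; omega
    obtain ⟨A, hAsub, hAcard⟩ :=
      Finset.exists_subset_card_eq (s := (({x, y, z} : Finset V)ᶜ)) (n := k - 1) hcompl
    have hx : x ∉ A := fun hc => Finset.mem_compl.1 (hAsub hc) (by simp)
    have hy : y ∉ A := fun hc => Finset.mem_compl.1 (hAsub hc) (by simp)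
    have hz : z ∉ A := fun hc => Finset.mem_compl.1 (hAsub hc) (by simp)
    rw [Homog3Aux.gamma_eq_neg_fsum γ k hk3 hAcard hx hy hz hxy hxz hyz h0 h1s h2s,
      Homog3Aux.fsum_const γ k hk3 hkv h0 h1s h2s A A₀ hAcard hA₀]
  -- the key dichotomy on triples
  have key : ∀ T : Finset V, T.card = 3 →
      (Homog3Aux.HomogCond G T ↔ Homog3Aux.HomogCond G' T) := by
    intro T hT
    by_cases hG : Homog3Aux.HomogCond G T <;> by_cases hG' : Homog3Aux.HomogCond G' T
    · exact iff_of_true hG hG'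
    · exfalso
      have hval : γ T = 1 := by simp [hγdef, Homog3Aux.hind_pos hG, Homog3Aux.hind_neg hG']
      have hone : - Homog3Aux.fsum γ A₀ = 1 := by rw [← hgam T hT, hval]
      have hnotG' : ∀ T' : Finset V, T'.card = 3 → ¬ Homog3Aux.HomogCond G' T' := by
        intro T' hT' hcond
        have hg := hgam T' hT'
        rw [hone] at hg
        by_cases hg2 : Homog3Aux.HomogCond G T'
        · have hval' : γ T' = 0 := by simp [hγdef, Homog3Aux.hind_pos hg2, Homog3Aux.hind_pos hcond]
          rw [hval'] at hg
          exact zero_ne_one hg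
        · have hval' : γ T' = -1 := by simp [hγdef, Homog3Aux.hind_neg hg2, Homog3Aux.hind_pos hcond]
          rw [hval'] at hg
          exact h2ne (by linear_combination - hg)
      obtain ⟨S₀, hS₀3, hS₀⟩ := Homog3Aux.ramsey33 G' hv6
      exact hnotG' S₀ hS₀3 hS₀
    · exfalso
      have hval : γ T = -1 := by simp [hγdef, Homog3Aux.hind_neg hG, Homog3Aux.hind_pos hG']
      have hone : - Homog3Aux.fsum γ A₀ = -1 := by rw [← hgam T hT, hval]
      have hnotG : ∀ T' : Finset V, T'.card = 3 → ¬ Homog3Aux.HomogCond G T' := by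
        intro T' hT' hcond
        have hg := hgam T' hT'
        rw [hone] at hg
        by_cases hg2 : Homog3Aux.HomogCond G' T'
        · have hval' : γ T' = 0 := by simp [hγdef, Homog3Aux.hind_pos hcond, Homog3Aux.hind_pos hg2]
          rw [hval'] at hg
          exact zero_ne_one (by linear_combination - hg)
        · have hval' : γ T' = 1 := by simp [hγdef, Homog3Aux.hind_pos hcond, Homog3Aux.hind_neg hg2]
          rw [hval'] at hg
          exact h2ne (by linear_combination hg)
      obtain ⟨S₀, hS₀3, hS₀⟩ := Homog3Aux.ramsey33 G hv6
      exact hnotG S₀ hS₀3 hS₀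
    · exact iff_of_false hG hG'
  intro S
  constructor
  · rintro ⟨hS3, hcond⟩
    exact ⟨hS3, (key S hS3).1 hcond⟩
  · rintro ⟨hS3, hcond⟩
    exact ⟨hS3, (key S hS3).2 hcond⟩
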